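/- Let G = ⟨α, τ : α^n = τ^2 = 1, τα = α^{-1}τ⟩ be the dihedral group of order 2n with n ≥ 3. If U is an atom of B(G) with |U_{τ⟨α⟩}| > 2, then the maximum multiplicity of a term in U_{τ⟨α⟩} satisfies h(U_{τ⟨α⟩}) ≤ |U_{τ⟨α⟩}|/2. -/

import Mathlib

namespace ProductOne

open scoped Classical

variable {G : Type*} [Group G]

/-- `S` is a product-one sequence over `G`: its terms can be ordered with product `1`. -/
def IsProductOne (S : Multiset G) : Prop :=
  ∃ l : List G, (l : Multiset G) = S ∧ l.prod = 1

/-- `S` is an atom (a minimal product-one sequence): it is a nontrivial product-one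
sequence that is not the concatenation of two nontrivial product-one sequences. -/
def IsAtomSeq (S : Multiset G) : Prop :=
  S ≠ 0 ∧ IsProductOne S ∧
    ∀ A B : Multiset G, S = A + B → IsProductOne A → IsProductOne B → A = 0 ∨ B = 0

/-- `S` is a sequence over the subset `G₀ ⊆ G`. -/
def SeqOn (G₀ : Set G) (S : Multiset G) : Prop := ∀ g ∈ S, g ∈ G₀

/-- `S` is an atom of the monoid `B(G₀)` of product-one sequences over `G₀`. -/
def IsAtomSeqOn (G₀ : Set G) (S : Multiset G) : Prop := SeqOn G₀ S ∧ IsAtomSeq S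

/-- The set of lengths `L(A)` of factorizations of `A` into atoms over `G₀`. -/
def lengthsOn (G₀ : Set G) (A : Multiset G) : Set ℕ :=
  {k | ∃ f : Multiset (Multiset G), Multiset.card f = k ∧
        (∀ U ∈ f, IsAtomSeqOn G₀ U) ∧ f.sum = A}

/-- The set of lengths `L(A)` over the whole group. -/
def lengths (A : Multiset G) : Set ℕ := lengthsOn Set.univ A

/-- The set of distances of a set `L ⊆ ℕ`. -/
def distancesOf (L : Set ℕ) : Set ℕ :=
  {d | 0 < d ∧ ∃ a, a ∈ L ∧ a + d ∈ L ∧ ∀ b ∈ L, ¬(a < b ∧ b < a + d)}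

/-- The set of distances `Δ(G₀)` of the monoid `B(G₀)`. -/
def DeltaOn (G₀ : Set G) : Set ℕ :=
  {d | ∃ A : Multiset G, SeqOn G₀ A ∧ IsProductOne A ∧ d ∈ distancesOf (lengthsOn G₀ A)}

/-- The set of distances `Δ(G)` of `B(G)`. -/
def Delta (G : Type*) [Group G] : Set ℕ := DeltaOn (Set.univ : Set G)

/-- The large Davenport constant of `G₀`: maximal length of an atom of `B(G₀)`. -/
noncomputable def DavenportOn (G₀ : Set G) : ℕ :=
  sSup {k | ∃ S : Multiset G, IsAtomSeqOn G₀ S ∧ Multiset.card S = k}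

/-- The large Davenport constant `D(G)`. -/
noncomputable def Davenport (G : Type*) [Group G] : ℕ :=
  DavenportOn (Set.univ : Set G)

/-- The small Davenport constant `d(G₀)`: maximal length of a product-one free
sequence over `G₀`. -/
noncomputable def smallDavenportOn (G₀ : Set G) : ℕ :=
  sSup {k | ∃ S : Multiset G, SeqOn G₀ S ∧ Multiset.card S = k ∧
        ∀ T : Multiset G, T ≤ S → T ≠ 0 → ¬IsProductOne T}

/-- `Δ*(G) = {min Δ(G₀) : G₀ ⊆ G with Δ(G₀) ≠ ∅}`. -/
def DeltaStar (G : Type*) [Group G] : Set ℕ :=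
  {d | ∃ G₀ : Set G, (DeltaOn G₀).Nonempty ∧ d = sInf (DeltaOn G₀)}

/-- The elasticity `ρ(L) = max L / min L` of a set of lengths (with the set of
positive elements used, and `ρ = 1` if there are none). -/
noncomputable def elasticity (L : Set ℕ) : ℚ :=
  if (L ∩ {k | 0 < k}).Nonempty then
    ((sSup (L ∩ {k | 0 < k}) : ℕ) : ℚ) / ((sInf (L ∩ {k | 0 < k}) : ℕ) : ℚ)
  else 1

/-- The elasticity `ρ(G₀)` of the monoid `B(G₀)`. -/
noncomputable def rhoOn (G₀ : Set G) : ℝ :=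
  sSup {x : ℝ | ∃ A : Multiset G, SeqOn G₀ A ∧ IsProductOne A ∧
    x = (elasticity (lengthsOn G₀ A) : ℝ)}

/-- `Δ*_ρ(G) = {min Δ(G₀) : G₀ ⊆ G with ρ(G₀) = D(G)/2}`. -/
noncomputable def DeltaRhoStar (G : Type*) [Group G] : Set ℕ :=
  {d | ∃ G₀ : Set G, rhoOn G₀ = (Davenport G : ℝ) / 2 ∧ d = sInf (DeltaOn G₀)}

/-- Divisibility in the monoid `B(G)`. -/
def BDvd (A S : Multiset G) : Prop :=
  ∃ C : Multiset G, IsProductOne C ∧ S = A + C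

/-- The `ω`-invariant `ω(B(G), A)`. -/
noncomputable def omegaAt (A : Multiset G) : ℕ∞ :=
  sInf {N : ℕ∞ | ∀ f : Multiset (Multiset G),
    (∀ B ∈ f, IsProductOne B) → BDvd A f.sum →
    ∃ t ≤ f, (Multiset.card t : ℕ∞) ≤ N ∧ BDvd A t.sum}

/-- `ω(G) = sup {ω(B(G), U) : U an atom of B(G)}`. -/
noncomputable def omegaInv (G : Type*) [Group G] : ℕ∞ :=
  ⨆ U ∈ {U : Multiset G | IsAtomSeq U}, omegaAt U

/-- `z` is a factorization of `A` into atoms. -/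
def IsFactorization (A : Multiset G) (z : Multiset (Multiset G)) : Prop :=
  (∀ U ∈ z, IsAtomSeq U) ∧ z.sum = A

/-- The distance between two factorizations. -/
noncomputable def factDist (z z' : Multiset (Multiset G)) : ℕ :=
  letI := Classical.decEq (Multiset G)
  max (Multiset.card (z - z')) (Multiset.card (z' - z))

/-- The catenary degree `c(A)`. -/
noncomputable def catenaryAt (A : Multiset G) : ℕ∞ :=
  sInf {N : ℕ∞ | ∀ z z' : Multiset (Multiset G),
    IsFactorization A z → IsFactorization A z' →
    Relation.ReflTransGen
      (fun x y => IsFactorization A y ∧ (factDist x y : ℕ∞) ≤ N) z z'}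

/-- The set of positive catenary degrees `Ca(G)`. -/
noncomputable def CatenarySet (G : Type*) [Group G] : Set ℕ∞ :=
  {c | ∃ A : Multiset G, IsProductOne A ∧ catenaryAt A = c ∧ 0 < c}

/-- The catenary degree `c(G)` of `B(G)`. -/
noncomputable def catenaryDegree (G : Type*) [Group G] : ℕ∞ :=
  ⨆ A ∈ {A : Multiset G | IsProductOne A}, catenaryAt A

/-- The cross number `k(S)` of a sequence. -/
noncomputable def crossNumber (S : Multiset G) : ℚ :=
  (S.map fun g => (1 : ℚ) / (orderOf g : ℚ)).sum

/-- The system of sets of lengths `L(G)`. -/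
def LSystem (G : Type*) [Group G] : Set (Set ℕ) :=
  {L | ∃ A : Multiset G, IsProductOne A ∧ L = lengths A}

/-- The set of products `π(S)` of all orderings of the terms of `S`. -/
def piSet (S : Multiset G) : Set G :=
  {g | ∃ l : List G, (l : Multiset G) = S ∧ l.prod = g}

/-- The sumset `{x₁, -x₁} + ⋯ + {x_s, -x_s}` for a sequence `a = x₁ ⋯ x_s`. -/
def signedSums {α : Type*} [AddCommGroup α] (a : Multiset α) : Set α :=
  {z | ∃ t ≤ a, z = t.sum + t.sum - a.sum}

/-- `Σ_k(T)`: the set of sums of `k`-term subsequences of `T`. -/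
def subseqSums {α : Type*} [AddCommMonoid α] (k : ℕ) (T : Multiset α) : Set α :=
  {z | ∃ t ≤ T, Multiset.card t = k ∧ t.sum = z}

/-- The subsequence `S_X` of all terms of `S` lying in `X`. -/
noncomputable def restrictTo (X : Set G) (S : Multiset G) : Multiset G :=
  letI := Classical.decPred fun g => g ∈ X
  S.filter fun g => g ∈ X

/-- The maximum multiplicity `h(S)` of a term of `S`. -/
noncomputable def maxMultiplicity {α : Type*} (S : Multiset α) : ℕ :=
  letI := Classical.decEq α
  S.toFinset.sup S.count

end ProductOne

section Aux

set_option linter.unusedSectionVars false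

namespace DihedralAux

open DihedralGroup List

variable {α : Type*} [DecidableEq α] {n : ℕ}

lemma noAdj_count (g : α) : ∀ ρ : List α, (∀ q1 q2 : List α, ρ ≠ q1 ++ g :: g :: q2) →
    2 * ρ.count g ≤ if ρ.head? = some g then ρ.length + 1 else ρ.length := by
  intro ρ
  induction ρ with
  | nil => simp
  | cons a t ih =>
    intro hna
    have hnt : ∀ q1 q2 : List α, t ≠ q1 ++ g :: g :: q2 := by
      intro q1 q2 h
      exact hna (a :: q1) q2 (by simp [h])
    have iht := ih hnt
    by_cases hag : a = g
    · subst hag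
      have ht : t.head? ≠ some a := by
        intro h
        match t, h with
        | b :: t', h =>
          simp at h
          exact hna [] t' (by simp [h])
      rw [if_neg ht] at iht
      simp only [List.count_cons, List.head?_cons, List.length_cons]
      simp
      omega
    · have h2 : 2 * t.count g ≤ t.length + 1 := by
        split at iht <;> omega
      simp only [List.count_cons, List.head?_cons, List.length_cons]
      simp [hag]
      omega

lemma noAdj_reverse (g : α) (ρ : List α) (h : ∀ q1 q2 : List α, ρ ≠ q1 ++ g :: g :: q2) :
    ∀ q1 q2 : List α, ρ.reverse ≠ q1 ++ g :: g :: q2 := by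
  intro q1 q2 hr
  apply h q2.reverse q1.reverse
  have := congrArg List.reverse hr
  simpa using this

lemma exists_adjacent (g : α) (ρ : List α) (hL : 2 ≤ ρ.length)
    (hm : ρ.length < 2 * ρ.count g) :
    (∃ q1 q2, ρ = q1 ++ g :: g :: q2) ∨ (∃ q, ρ = g :: q ++ [g]) := by
  by_cases hadj : ∃ q1 q2, ρ = q1 ++ g :: g :: q2
  · exact Or.inl hadj
  push_neg at hadj
  have hna : ∀ q1 q2 : List α, ρ ≠ q1 ++ g :: g :: q2 := hadj
  have h1 := noAdj_count g ρ hna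
  have h2 := noAdj_count g ρ.reverse (noAdj_reverse g ρ hna)
  rw [List.count_reverse, List.length_reverse] at h2
  have hh : ρ.head? = some g := by
    by_contra hc
    rw [if_neg hc] at h1; omega
  have hl : ρ.reverse.head? = some g := by
    by_contra hc
    rw [if_neg hc] at h2; omega
  right
  obtain ⟨t, ht⟩ : ∃ t, ρ = g :: t := by
    cases ρ with
    | nil => simp at hh
    | cons a t => simp at hh; exact ⟨t, by rw [hh]⟩
  subst ht
  have htne : t ≠ [] := by
    intro h; subst h; simp at hL
  obtain ⟨q, y, hq⟩ := t.eq_nil_or_concat.resolve_left htne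
  subst hq
  have : y = g := by
    rw [List.concat_eq_append] at hl
    simp [List.reverse_cons, List.reverse_append] at hl
    exact hl
  exact ⟨q, by simp [this, List.concat_eq_append]⟩

lemma filter_split_first {P : α → Bool} :
    ∀ (l : List α) (y : α) (q : List α), l.filter P = y :: q →
    ∃ u v, l = u ++ y :: v ∧ u.filter P = [] ∧ v.filter P = q ∧ P y = true := by
  intro l
  induction l with
  | nil => intro y q h; simp at h
  | cons a t ih =>
    intro y q h
    by_cases hp : P a = true
    · rw [List.filter_cons_of_pos hp] at h
      obtain ⟨rfl, rfl⟩ : a = y ∧ t.filter P = q := by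
        constructor <;> simp_all
      exact ⟨[], t, by simp, by simp, rfl, hp⟩
    · rw [List.filter_cons_of_neg hp] at h
      obtain ⟨u, v, rfl, hu, hv, hy⟩ := ih y q h
      exact ⟨a :: u, v, by simp, by simp [List.filter_cons_of_neg hp, hu], hv, hy⟩

lemma filter_split_prefix {P : α → Bool} :
    ∀ (q1 : List α) (l rest : List α), l.filter P = q1 ++ rest →
    ∃ u v, l = u ++ v ∧ u.filter P = q1 ∧ v.filter P = rest := by
  intro q1
  induction q1 with
  | nil => intro l rest h; exact ⟨[], l, by simp, by simp, by simpa using h⟩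
  | cons y q1' ih =>
    intro l rest h
    rw [List.cons_append] at h
    obtain ⟨u0, v0, rfl, hu0, hv0, hy⟩ := filter_split_first _ _ _ h
    obtain ⟨u1, v, rfl, hu1, hv⟩ := ih v0 rest hv0
    exact ⟨u0 ++ y :: u1, v, by simp, by
      simp [List.filter_append, hu0, List.filter_cons_of_pos hy, hu1], hv⟩

lemma filter_split_last {P : α → Bool} (l : List α) (q : List α) (y : α)
    (h : l.filter P = q ++ [y]) :
    ∃ p1 p2, l = p1 ++ y :: p2 ∧ p1.filter P = q ∧ p2.filter P = [] ∧ P y = true := by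
  obtain ⟨u, v, rfl, hu, hv⟩ := filter_split_prefix q _ [y] h
  obtain ⟨wa, wb, rfl, hwa, hwb, hy⟩ := filter_split_first v y [] hv
  exact ⟨u ++ wa, wb, by simp, by simp [List.filter_append, hu, hwa], hwb, hy⟩

def isRef : DihedralGroup n → Bool
  | .r _ => false
  | .sr _ => true

@[simp] lemma isRef_r (i : ZMod n) : isRef (r i) = false := rfl
@[simp] lemma isRef_sr (i : ZMod n) : isRef (sr i) = true := rfl

lemma prod_of_refFree : ∀ w : List (DihedralGroup n), w.filter isRef = [] →
    ∃ c : ZMod n, w.prod = r c := by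
  intro w
  induction w with
  | nil => intro _; exact ⟨0, one_def.symm⟩
  | cons a t ih =>
    intro h
    have ha : isRef a = false := by
      by_contra hc
      rw [List.filter_cons_of_pos (by simpa using hc)] at h
      simp at h
    rw [List.filter_cons_of_neg (by simp [ha])] at h
    obtain ⟨c, hc⟩ := ih h
    obtain i | i := a
    · exact ⟨i + c, by simp [hc]⟩
    · simp at ha

lemma rotate_prod_one {l1 l2 : List (DihedralGroup n)} (h : (l1 ++ l2).prod = 1) :
    (l2 ++ l1).prod = 1 := by
  rw [List.prod_append] at h ⊢
  calc l2.prod * l1.prod = l1.prod⁻¹ * (l1.prod * l2.prod) * l1.prod := by group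
    _ = 1 := by rw [h]; group

lemma key1 (x c : ZMod n) (z : DihedralGroup n) :
    sr x * (r c * (sr x * z)) = r (-c) * z := by
  rw [← mul_assoc, ← mul_assoc, sr_mul_r, sr_mul_sr]
  congr 2
  ring

lemma key2 (i j : ZMod n) (z : DihedralGroup n) :
    r i * (r j * z) = r j * (r i * z) := by
  rw [← mul_assoc, ← mul_assoc, r_mul_r, r_mul_r, add_comm]

lemma key3 (y c : ZMod n) (z : DihedralGroup n) :
    r (-c) * (sr y * z) = sr y * (r c * z) := by
  rw [← mul_assoc, ← mul_assoc, r_mul_sr, sr_mul_r]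
  congr 2
  ring

lemma key3' (y c : ZMod n) (z : DihedralGroup n) :
    r c * (sr y * z) = sr y * (r (-c) * z) := by
  rw [← mul_assoc, ← mul_assoc, r_mul_sr, sr_mul_r]
  congr 2
  ring

lemma main_split (x : ZMod n) (p w s : List (DihedralGroup n))
    (hprod : (p ++ sr x :: w ++ sr x :: s).prod = 1)
    (hw : w.filter isRef = [])
    (href : p.filter isRef ≠ [] ∨ s.filter isRef ≠ []) :
    ∃ m : List (DihedralGroup n), m ≠ [] ∧ m.prod = 1 ∧
      (↑m : Multiset (DihedralGroup n)) = ↑p + ↑w + ↑s := by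
  obtain ⟨c, hc⟩ := prod_of_refFree w hw
  by_cases hs0 : s.filter isRef = []
  · -- reflection is in p
    have hp0 : p.filter isRef ≠ [] := href.resolve_right (by simp [hs0])
    obtain ⟨q, y0, hq⟩ := (p.filter isRef).eq_nil_or_concat.resolve_left hp0
    rw [List.concat_eq_append] at hq
    obtain ⟨p1, p2, hp, hp1, hp2, hy0⟩ := filter_split_last p q y0 hq
    obtain i | y := y0
    · simp at hy0
    obtain ⟨e, he⟩ := prod_of_refFree p2 hp2
    obtain ⟨f, hf⟩ := prod_of_refFree s hs0
    refine ⟨p1 ++ w ++ sr y :: (p2 ++ s), by simp, ?_, ?_⟩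
    · rw [hp] at hprod
      simp only [List.prod_append, List.prod_cons, mul_assoc] at hprod ⊢
      rw [hc, he, hf] at hprod ⊢
      rw [key1] at hprod
      rw [key3', key2]
      exact hprod
    · rw [hp]
      have hperm : (p1 ++ w ++ sr y :: (p2 ++ s)).Perm
          ((p1 ++ sr y :: p2) ++ w ++ s) := by
        simp only [List.perm_iff_count, List.count_append, List.count_cons]
        intro a; omega
      exact Multiset.coe_eq_coe.mpr hperm
  · -- reflection is in s
    obtain ⟨y0, q, hq⟩ : ∃ y0 q, s.filter isRef = y0 :: q := by
      cases h : s.filter isRef with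
      | nil => exact absurd h hs0
      | cons y0 q => exact ⟨y0, q, rfl⟩
    obtain ⟨s1, s2, hs, hs1, hs2, hy0⟩ := filter_split_first s y0 q hq
    obtain i | y := y0
    · simp at hy0
    obtain ⟨d, hd⟩ := prod_of_refFree s1 hs1
    refine ⟨p ++ s1 ++ sr y :: (w ++ s2), by simp, ?_, ?_⟩
    · rw [hs] at hprod
      simp only [List.prod_append, List.prod_cons, mul_assoc] at hprod ⊢
      rw [hc, hd] at hprod ⊢
      rw [key1, key2, key3] at hprod
      exact hprod
    · rw [hs]
      have hperm : (p ++ s1 ++ sr y :: (w ++ s2)).Perm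
          (p ++ w ++ (s1 ++ sr y :: s2)) := by
        simp only [List.perm_iff_count, List.count_append, List.count_cons]
        intro a; omega
      exact Multiset.coe_eq_coe.mpr hperm

lemma no_split {U : Multiset (DihedralGroup n)}
    (hU2 : ∀ A B : Multiset (DihedralGroup n), U = A + B → ProductOne.IsProductOne A → ProductOne.IsProductOne B →
      A = 0 ∨ B = 0)
    (x : ZMod n) (p w s : List (DihedralGroup n))
    (hcoe : (↑(p ++ sr x :: w ++ sr x :: s) : Multiset (DihedralGroup n)) = U)
    (hprod : (p ++ sr x :: w ++ sr x :: s).prod = 1)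
    (hw : w.filter isRef = [])
    (href : p.filter isRef ≠ [] ∨ s.filter isRef ≠ []) : False := by
  obtain ⟨m, hmne, hmprod, hmcoe⟩ := main_split x p w s hprod hw href
  have hperm : (p ++ sr x :: w ++ sr x :: s).Perm ([sr x, sr x] ++ (p ++ w ++ s)) := by
    simp only [List.perm_iff_count, List.count_append, List.count_cons, List.count_nil]
    intro g; omega
  have hsplit : U = ↑[sr x, sr x] + ↑m := by
    rw [← hcoe, Multiset.coe_eq_coe.mpr hperm, hmcoe]
    simp [← Multiset.cons_coe, ← Multiset.coe_add, add_assoc]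
  have h1 : ProductOne.IsProductOne (↑[sr x, sr x] : Multiset (DihedralGroup n)) :=
    ⟨[sr x, sr x], rfl, by
      rw [List.prod_cons, List.prod_cons, List.prod_nil, mul_one, sr_mul_sr, sub_self, ← one_def]⟩
  have h2 : ProductOne.IsProductOne (↑m : Multiset (DihedralGroup n)) := ⟨m, rfl, hmprod⟩
  rcases hU2 _ _ hsplit h1 h2 with h | h
  · simp [Multiset.coe_eq_zero] at h
  · exact hmne ((Multiset.coe_eq_zero m).mp h)

end DihedralAux

end Aux

open ProductOne DihedralGroup in
/-- If `U` is an atom of `B(D_{2n})` (`n ≥ 3`), written as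
`U = U_{⟨α⟩} + U_{τ⟨α⟩}` with `U_{τ⟨α⟩} = b.map sr`, and `|U_{τ⟨α⟩}| > 2`, then
`h(U_{τ⟨α⟩}) ≤ |U_{τ⟨α⟩}|/2`. -/
theorem maxMultiplicity_le_half (n : ℕ) (hn : 3 ≤ n) (a b : Multiset (ZMod n))
    (hU : IsAtomSeq (a.map DihedralGroup.r + b.map DihedralGroup.sr))
    (hb : 2 < Multiset.card b) :
    2 * maxMultiplicity (b.map DihedralGroup.sr) ≤ Multiset.card b := by
  open DihedralAux in
  by_contra hcon
  push_neg at hcon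
  set S := b.map DihedralGroup.sr with hSdef
  have hcard : Multiset.card S = Multiset.card b := Multiset.card_map _ _
  have hSne : S ≠ 0 := by
    intro h
    rw [h] at hcard
    simp at hcard
    omega
  obtain ⟨g, hg, hgs⟩ : ∃ g ∈ S, Multiset.card b < 2 * Multiset.count g S := by
    classical
    unfold maxMultiplicity at hcon
    rw [Subsingleton.elim (Classical.decEq (DihedralGroup n)) inferInstance] at hcon
    obtain ⟨g, hgmem, hval⟩ := Finset.exists_mem_eq_sup S.toFinset
      (Multiset.toFinset_nonempty.mpr hSne) S.count
    rw [hval] at hcon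
    exact ⟨g, Multiset.mem_toFinset.mp hgmem, hcon⟩
  obtain ⟨x, -, rfl⟩ := Multiset.mem_map.mp hg
  obtain ⟨hUne, hUone, hUsplit⟩ := hU
  obtain ⟨l, hlcoe, hlprod⟩ := hUone
  have hperm0 : l.Perm (a.toList.map DihedralGroup.r ++ b.toList.map DihedralGroup.sr) := by
    apply Multiset.coe_eq_coe.mp
    rw [hlcoe, ← Multiset.coe_add]
    congr 1 <;> rw [← Multiset.map_coe, Multiset.coe_toList]
  have hρperm : (l.filter isRef).Perm (b.toList.map DihedralGroup.sr) := by
    have h := hperm0.filter isRef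
    rwa [List.filter_append,
      (show (a.toList.map DihedralGroup.r).filter isRef = [] by
        apply List.filter_eq_nil_iff.mpr
        intro z hz
        obtain ⟨i, -, rfl⟩ := List.mem_map.mp hz
        simp),
      (show (b.toList.map DihedralGroup.sr).filter isRef = b.toList.map DihedralGroup.sr by
        apply List.filter_eq_self.mpr
        intro z hz
        obtain ⟨i, -, rfl⟩ := List.mem_map.mp hz
        simp),
      List.nil_append] at h
  have hρlen : (l.filter isRef).length = Multiset.card b := by
    rw [hρperm.length_eq, List.length_map, Multiset.length_toList]
  have hρcount : (l.filter isRef).count (DihedralGroup.sr x) =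
      Multiset.count (DihedralGroup.sr x) S := by
    rw [hρperm.count_eq]
    rw [← Multiset.coe_count]
    congr 1
    rw [← Multiset.map_coe, Multiset.coe_toList]
  rcases exists_adjacent (DihedralGroup.sr x) (l.filter isRef) (by omega) (by omega) with
    ⟨q1, q2, hsplit⟩ | ⟨q, hsplit⟩
  · obtain ⟨u, v, hl1, hu, hv⟩ :=
      filter_split_prefix q1 l (DihedralGroup.sr x :: DihedralGroup.sr x :: q2) hsplit
    obtain ⟨w1, v', hv1, hw1, hv'f, -⟩ :=
      filter_split_first v (DihedralGroup.sr x) (DihedralGroup.sr x :: q2) hv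
    obtain ⟨w, s, hs', hwf, hsf, -⟩ := filter_split_first v' (DihedralGroup.sr x) q2 hv'f
    have hl2 : l = (u ++ w1) ++ DihedralGroup.sr x :: w ++ DihedralGroup.sr x :: s := by
      rw [hl1, hv1, hs']
      simp [List.append_assoc]
    have hq12 : q1.length + 2 + q2.length = Multiset.card b := by
      rw [← hρlen, hsplit]
      simp
      omega
    refine no_split hUsplit x (u ++ w1) w s ?_ ?_ hwf ?_
    · rw [← hl2, hlcoe]
    · rw [← hl2]; exact hlprod
    · have hpf : (u ++ w1).filter isRef = q1 := by
        rw [List.filter_append, hu, hw1, List.append_nil]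
      by_cases hq1 : q1 = []
      · right
        rw [hsf]
        intro h
        rw [hq1, h] at hq12
        simp at hq12
        omega
      · left
        rw [hpf]
        exact hq1
  · obtain ⟨w0, v, hl1, hw0, hv, -⟩ :=
      filter_split_first l (DihedralGroup.sr x) (q ++ [DihedralGroup.sr x]) hsplit
    obtain ⟨p1, p2, hv1, hp1, hp2, -⟩ := filter_split_last v q (DihedralGroup.sr x) hv
    have hl2 : l = (w0 ++ [DihedralGroup.sr x]) ++ (p1 ++ DihedralGroup.sr x :: p2) := by
      rw [hl1, hv1]
      simp
    have hshape : (p1 ++ DihedralGroup.sr x :: p2) ++ (w0 ++ [DihedralGroup.sr x]) =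
        p1 ++ DihedralGroup.sr x :: (p2 ++ w0) ++ DihedralGroup.sr x :: [] := by
      simp [List.append_assoc]
    have hrotperm : ((p1 ++ DihedralGroup.sr x :: p2) ++ (w0 ++ [DihedralGroup.sr x])).Perm l := by
      rw [hl2]
      exact List.perm_append_comm
    refine no_split hUsplit x p1 (p2 ++ w0) [] ?_ ?_ ?_ ?_
    · rw [← hshape, Multiset.coe_eq_coe.mpr hrotperm, hlcoe]
    · rw [← hshape]
      exact rotate_prod_one (by rw [← hl2]; exact hlprod)
    · rw [List.filter_append, hp2, hw0, List.append_nil]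
    · left
      rw [hp1]
      intro h
      rw [h] at hsplit
      have := hρlen
      rw [hsplit] at this
      simp at this
      omega
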